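/- Let F be the free semigroup on three generators a, b, c, and let c₀ be the smallest congruence on F containing, for all elements x₁, x₂, x₃, x₄, x, y ∈ F, the pairs (x₁x₂x₃x₄, x₂x₃x₁x₄), (x²y, yxy), and (yxy, yx²). Then the images in the quotient F/c₀ of the six words a, b, c, a², b², c² are pairwise distinct. -/

import Mathlib

/-- All substitution instances of the identities
`x₁x₂x₃x₄ = x₂x₃x₁x₄`, `x²y = yxy`, `yxy = yx²`. -/
def m13Rel : FreeSemigroup (Fin 3) → FreeSemigroup (Fin 3) → Prop := fun u v =>
  (∃ x₁ x₂ x₃ x₄ : FreeSemigroup (Fin 3),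
      u = x₁ * x₂ * x₃ * x₄ ∧ v = x₂ * x₃ * x₁ * x₄) ∨
  (∃ x y : FreeSemigroup (Fin 3), u = x * x * y ∧ v = y * x * y) ∨
  (∃ x y : FreeSemigroup (Fin 3), u = y * x * y ∧ v = y * (x * x))

/-- A small model semigroup: generators plus contents. -/
def M13S := Fin 3 ⊕ Finset (Fin 3)

instance : DecidableEq M13S := instDecidableEqSum

def m13cont : M13S → Finset (Fin 3)
  | .inl i => {i}
  | .inr A => A

instance : Mul M13S := ⟨fun u v => .inr (m13cont u ∪ m13cont v)⟩

lemma m13cont_mul (u v : M13S) : m13cont (u * v) = m13cont u ∪ m13cont v := rfl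

instance : Semigroup M13S where
  mul_assoc u v w := by
    show Sum.inr _ = Sum.inr _
    congr 1
    simp [m13cont_mul, Finset.union_assoc]

def m13f : FreeSemigroup (Fin 3) →ₙ* M13S := FreeSemigroup.lift Sum.inl

/-- The kernel congruence of `m13f`. -/
def m13ker : Con (FreeSemigroup (Fin 3)) where
  r u v := m13f u = m13f v
  iseqv := ⟨fun _ => rfl, Eq.symm, Eq.trans⟩
  mul' h₁ h₂ := by
    show m13f _ = m13f _
    rw [map_mul, map_mul, h₁, h₂]

lemma m13S_eq (u v : M13S) (h : m13cont u = m13cont v) : u * u = v * v := by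
  show Sum.inr _ = Sum.inr _
  simp [m13cont_mul, h]

lemma m13key : conGen m13Rel ≤ m13ker := by
  apply Con.conGen_le.mpr
  rintro u v (⟨x₁, x₂, x₃, x₄, rfl, rfl⟩ | ⟨x, y, rfl, rfl⟩ | ⟨x, y, rfl, rfl⟩) <;>
    · show m13f _ = m13f _
      simp only [map_mul]
      show Sum.inr _ = Sum.inr _
      congr 1
      ext i
      simp [m13cont_mul, Finset.mem_union]
      tauto

lemma m13ne {u v : FreeSemigroup (Fin 3)} (h : m13f u ≠ m13f v) :
    (u : (conGen m13Rel).Quotient) ≠ (v : (conGen m13Rel).Quotient) := by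
  intro he
  exact h (m13key ((Con.eq _).mp he))

/-- In the free semigroup on three generators `a b c` modulo the smallest
congruence generated by all instances of `x₁x₂x₃x₄ = x₂x₃x₁x₄` and
`x²y = yxy = yx²`, the images of `a`, `b`, `c`, `a²`, `b²`, `c²`
are pairwise distinct. -/
theorem stmt_10 :
    let a := FreeSemigroup.of (0 : Fin 3)
    let b := FreeSemigroup.of (1 : Fin 3)
    let c := FreeSemigroup.of (2 : Fin 3)
    ([a, b, c, a * a, b * b, c * c].map
        (fun w => (w : (conGen m13Rel).Quotient))).Pairwise (· ≠ ·) := by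
  intro a b c
  show List.Pairwise (· ≠ ·) [(a : (conGen m13Rel).Quotient), (b : (conGen m13Rel).Quotient), (c : (conGen m13Rel).Quotient), ((a * a : FreeSemigroup (Fin 3)) : (conGen m13Rel).Quotient), ((b * b : FreeSemigroup (Fin 3)) : (conGen m13Rel).Quotient), ((c * c : FreeSemigroup (Fin 3)) : (conGen m13Rel).Quotient)]
  refine List.Pairwise.cons ?_ (.cons ?_ (.cons ?_ (.cons ?_ (.cons ?_ (.cons ?_ .nil))))) <;>
    · intro x hx
      fin_cases hx <;> (apply m13ne; decide)
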